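/- Let n ≥ 6 be an even integer and let 0 ≤ r₁ ≤ r₂ ≤ ⋯ ≤ rₙ be integers such that (r₁,r₂,r₃,r₄) is one of: (0,0,0,i) with 0 ≤ i ≤ 2; (0,0,1,i) with 1 ≤ i ≤ 3; (0,1,1,i) with 1 ≤ i ≤ 2; or (0,1,2,i) with 2 ≤ i ≤ 3. Then ∑_{t ≥ rₙ+2, l(t−1) odd} 2^{d(t)−3/2} + ∑_{t ≥ rₙ+2, l(t−1) even} 2^{d(t)−1} ≤ 2^{r₄ − rₙ − 1}. Furthermore, when (r₁,r₂,r₃,r₄) = (0,0,0,2) or (0,0,1,3), the left-hand side is at most 2^{r₄ − rₙ − 2}. -/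

import Mathlib

/-- `l(t) = #{i : r i < t and r i − t is odd}`. -/
noncomputable def lfun (n : ℕ) (r : Fin n → ℤ) (t : ℤ) : ℕ :=
  {i : Fin n | r i < t ∧ Odd (r i - t)}.ncard

/-- `d(t) = t + (1/2) ∑_{i : r i < t − 1} (r i − t + 1)`. -/
noncomputable def dfun (n : ℕ) (r : Fin n → ℤ) (t : ℤ) : ℝ :=
  (t : ℝ) + (1 / 2) * ∑ i : Fin n, if r i < t - 1 then ((r i : ℝ) - (t : ℝ) + 1) else 0

/-- The tail sum `∑_{t ≥ t₀, l(t−1) odd} 2^{d(t)−3/2} + ∑_{t ≥ t₀, l(t−1) even} 2^{d(t)−1}`,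
with the variable `t = t₀ + j` running over `j ∈ ℕ`. -/
noncomputable def tailSum (n : ℕ) (r : Fin n → ℤ) (t₀ : ℤ) : ℝ :=
  (∑' j : ℕ, if Odd (lfun n r (t₀ + (j : ℤ) - 1)) then
      (2 : ℝ) ^ (dfun n r (t₀ + (j : ℤ)) - 3 / 2) else 0) +
  (∑' j : ℕ, if Even (lfun n r (t₀ + (j : ℤ) - 1)) then
      (2 : ℝ) ^ (dfun n r (t₀ + (j : ℤ)) - 1) else 0)

lemma my_parity_filter {ι : Type*} (s : Finset ι) (f : ι → ℤ) :
    Odd ((s.filter fun i => Odd (f i)).card) ↔ Odd (∑ i ∈ s, f i) := by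
  classical
  induction s using Finset.induction with
  | empty => simp
  | @insert a s h ih =>
    rw [Finset.sum_insert h, Finset.filter_insert]
    by_cases hf : Odd (f a)
    · rw [if_pos hf, Finset.card_insert_of_notMem (by simp [h]), Nat.odd_add_one, ih,
        Int.odd_add]
      simp [hf, Int.not_odd_iff_even]
    · rw [if_neg hf, ih, Int.odd_add']
      simp [Int.not_odd_iff_even.mp hf]

lemma my_core (n : ℕ) (hn : 6 ≤ n) (hne : Even n) (r : Fin n → ℤ) (R : ℤ)
    (hle : ∀ i, r i ≤ R) (B : ℝ)
    (hD : (R : ℝ) + ((∑ i, (r i : ℝ)) - (n : ℝ) * (R : ℝ) - (n : ℝ)) / 2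
      ≤ B + 3 / 2 - (n : ℝ) / 2) :
    tailSum n r (R + 2) ≤ (2 : ℝ) ^ B := by
  classical
  set S : ℝ := ∑ i, (r i : ℝ) with hS
  have hn6 : (6 : ℝ) ≤ (n : ℝ) := by exact_mod_cast hn
  -- closed form of dfun on the tail
  have hdfun : ∀ j : ℕ, dfun n r (R + 2 + (j : ℤ))
      = ((R : ℝ) + 2 + j) + (S - (n : ℝ) * ((R : ℝ) + 2 + j) + n) / 2 := by
    intro j
    unfold dfun
    have hcond : ∀ i : Fin n, r i < R + 2 + (j : ℤ) - 1 := by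
      intro i; have := hle i; omega
    rw [Finset.sum_congr rfl (fun i _ => if_pos (hcond i))]
    rw [Finset.sum_add_distrib, Finset.sum_sub_distrib, Finset.sum_const, Finset.sum_const,
      Finset.card_univ, Fintype.card_fin, nsmul_eq_mul, nsmul_eq_mul]
    push_cast
    ring
  -- parity of lfun on the tail
  have hpar : ∀ j : ℕ, (Odd (lfun n r (R + 2 + (j : ℤ) - 1)) ↔ Odd (∑ i, r i)) := by
    intro j
    set t : ℤ := R + 2 + (j : ℤ) - 1 with ht
    have hlt : ∀ i : Fin n, r i < t := by intro i; have := hle i; omega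
    unfold lfun
    have hset : {i : Fin n | r i < t ∧ Odd (r i - t)}
        = ↑(Finset.univ.filter fun i => Odd (r i - t)) := by
      ext i; simp [hlt i]
    rw [hset, Set.ncard_coe_finset, my_parity_filter]
    rw [Finset.sum_sub_distrib, Finset.sum_const, Finset.card_univ, Fintype.card_fin,
      nsmul_eq_mul]
    have hev : Even ((n : ℤ) * t) := ((Int.even_coe_nat n).mpr hne).mul_right t
    rw [Int.odd_sub]
    simp [hev]
  set w : ℝ := 1 - (n : ℝ) / 2 with hw
  set q : ℝ := (2 : ℝ) ^ w with hq
  have hq0 : 0 < q := Real.rpow_pos_of_pos two_pos w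
  have hq1 : q < 1 := Real.rpow_lt_one_of_one_lt_of_neg one_lt_two (by rw [hw]; linarith)
  set D0 : ℝ := dfun n r (R + 2) with hD0
  have hD0e : D0 = ((R : ℝ) + 2) + (S - (n : ℝ) * ((R : ℝ) + 2) + n) / 2 := by
    have h := hdfun 0
    simpa using h
  have hDj : ∀ j : ℕ, dfun n r (R + 2 + (j : ℤ)) = D0 + (j : ℝ) * w := by
    intro j; rw [hdfun j, hD0e, hw]; ring
  have hterm : ∀ (c : ℝ) (j : ℕ),
      (2 : ℝ) ^ (dfun n r (R + 2 + (j : ℤ)) - c) = (2 : ℝ) ^ (D0 - c) * q ^ j := by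
    intro c j
    rw [hDj j, show D0 + (j : ℝ) * w - c = (D0 - c) + w * (j : ℝ) by ring,
      Real.rpow_add two_pos, Real.rpow_mul (by norm_num : (0:ℝ) ≤ 2), Real.rpow_natCast,
      ← hq]
  have hsum : Summable (fun j : ℕ => (2 : ℝ) ^ (D0 - 1) * q ^ j) :=
    (summable_geometric_of_lt_one hq0.le hq1).mul_left _
  have htsum : ∑' j : ℕ, (2 : ℝ) ^ (D0 - 1) * q ^ j = (2 : ℝ) ^ (D0 - 1) * (1 - q)⁻¹ := by
    rw [tsum_mul_left, tsum_geometric_of_lt_one hq0.le hq1]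
  have hts : tailSum n r (R + 2) ≤ (2 : ℝ) ^ (D0 - 1) * (1 - q)⁻¹ := by
    unfold tailSum
    rcases Int.even_or_odd (∑ i, r i) with hS2 | hS2
    · have h1 : (∑' j : ℕ, if Odd (lfun n r (R + 2 + (j : ℤ) - 1)) then
          (2 : ℝ) ^ (dfun n r (R + 2 + (j : ℤ)) - 3 / 2) else 0) = 0 := by
        rw [tsum_congr (fun j => if_neg (by rw [hpar j]; exact Int.not_odd_iff_even.mpr hS2)),
          tsum_zero]
      have h2 : (∑' j : ℕ, if Even (lfun n r (R + 2 + (j : ℤ) - 1)) then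
          (2 : ℝ) ^ (dfun n r (R + 2 + (j : ℤ)) - 1) else 0)
          = ∑' j : ℕ, (2 : ℝ) ^ (D0 - 1) * q ^ j := by
        refine tsum_congr (fun j => ?_)
        rw [if_pos (Nat.not_odd_iff_even.mp (by rw [hpar j]; exact Int.not_odd_iff_even.mpr hS2)),
          hterm 1 j]
      rw [h1, h2, htsum, zero_add]
    · have h2 : (∑' j : ℕ, if Even (lfun n r (R + 2 + (j : ℤ) - 1)) then
          (2 : ℝ) ^ (dfun n r (R + 2 + (j : ℤ)) - 1) else 0) = 0 := by
        rw [tsum_congr (fun j => if_neg (Nat.not_even_iff_odd.mpr ((hpar j).mpr hS2))), tsum_zero]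
      have h1 : (∑' j : ℕ, if Odd (lfun n r (R + 2 + (j : ℤ) - 1)) then
          (2 : ℝ) ^ (dfun n r (R + 2 + (j : ℤ)) - 3 / 2) else 0)
          = ∑' j : ℕ, (2 : ℝ) ^ (D0 - 3 / 2) * q ^ j := by
        refine tsum_congr (fun j => ?_)
        rw [if_pos ((hpar j).mpr hS2), hterm (3 / 2) j]
      rw [h1, h2, add_zero, ← htsum]
      refine Summable.tsum_le_tsum (fun j => ?_)
        ((summable_geometric_of_lt_one hq0.le hq1).mul_left _) hsum
      exact mul_le_mul_of_nonneg_right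
        (Real.rpow_le_rpow_of_exponent_le one_le_two (by linarith)) (pow_nonneg hq0.le j)
  refine hts.trans ?_
  rw [mul_inv_le_iff₀ (by linarith : (0:ℝ) < 1 - q)]
  set x : ℝ := (2 : ℝ) ^ (-(n : ℝ) / 2) with hx
  have hx0 : 0 < x := Real.rpow_pos_of_pos two_pos _
  have hx8 : x ≤ 1 / 8 := by
    have h1 : x ≤ (2 : ℝ) ^ (-(3 : ℝ)) :=
      Real.rpow_le_rpow_of_exponent_le one_le_two (by linarith)
    have h2 : (2 : ℝ) ^ (-(3 : ℝ)) = 1 / 8 := by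
      rw [Real.rpow_neg (by norm_num), show (3:ℝ) = ((3:ℕ):ℝ) by norm_num, Real.rpow_natCast]
      norm_num
    exact le_of_le_of_eq h1 h2
  have hqx : q = 2 * x := by
    rw [hq, hx, show w = 1 + (-(n : ℝ) / 2) by rw [hw]; ring, Real.rpow_add two_pos,
      Real.rpow_one]
  have h52 : (2 : ℝ) ^ ((5 : ℝ) / 2) ≤ 6 := by
    have ha0 : (0 : ℝ) ≤ (2 : ℝ) ^ ((5 : ℝ) / 2) := (Real.rpow_pos_of_pos two_pos _).le
    have hsq : ((2 : ℝ) ^ ((5 : ℝ) / 2)) ^ (2 : ℕ) = 32 := by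
      rw [← Real.rpow_natCast ((2 : ℝ) ^ ((5 : ℝ) / 2)) 2,
        ← Real.rpow_mul (by norm_num : (0:ℝ) ≤ 2)]
      rw [show (5 : ℝ) / 2 * ((2:ℕ):ℝ) = ((5:ℕ):ℝ) by push_cast; ring, Real.rpow_natCast]
      norm_num
    nlinarith [sq_nonneg ((2 : ℝ) ^ ((5 : ℝ) / 2) - 6)]
  have h1 : (2 : ℝ) ^ (D0 - 1) ≤ (2 : ℝ) ^ (B + 5 / 2) * x := by
    rw [hx, ← Real.rpow_add two_pos]
    apply Real.rpow_le_rpow_of_exponent_le one_le_two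
    have hD0e' : D0 = (R : ℝ) + 2 + (S - (n : ℝ) * (R : ℝ) - (n : ℝ)) / 2 := by
      rw [hD0e]; ring
    linarith
  have h2 : (2 : ℝ) ^ (B + 5 / 2) ≤ 6 * (2 : ℝ) ^ B := by
    rw [Real.rpow_add two_pos, mul_comm]
    exact mul_le_mul_of_nonneg_right h52 (Real.rpow_pos_of_pos two_pos _).le
  have hBpos : (0 : ℝ) < (2 : ℝ) ^ B := Real.rpow_pos_of_pos two_pos _
  calc (2 : ℝ) ^ (D0 - 1) ≤ (2 : ℝ) ^ (B + 5 / 2) * x := h1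
    _ ≤ 6 * (2 : ℝ) ^ B * x := mul_le_mul_of_nonneg_right h2 hx0.le
    _ ≤ (2 : ℝ) ^ B * (1 - q) := by
        rw [hqx]
        nlinarith [mul_nonneg hBpos.le (by linarith : (0:ℝ) ≤ 1 - 8 * x)]

lemma my_sum_bound (n : ℕ) (hn : 4 ≤ n) (r : Fin n → ℤ)
    (hR : ∀ i, r i ≤ r ⟨n - 1, by omega⟩) :
    (∑ i, r i) ≤ r ⟨0, by omega⟩ + r ⟨1, by omega⟩ + r ⟨2, by omega⟩ + r ⟨3, by omega⟩
      + ((n : ℤ) - 4) * r ⟨n - 1, by omega⟩ := by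
  classical
  rw [← Finset.sum_filter_add_sum_filter_not Finset.univ (fun i : Fin n => (i : ℕ) < 4)]
  have h4 : Finset.univ.filter (fun i : Fin n => (i : ℕ) < 4)
      = {⟨0, by omega⟩, ⟨1, by omega⟩, ⟨2, by omega⟩, ⟨3, by omega⟩} := by
    ext i
    simp only [Finset.mem_filter, Finset.mem_univ, true_and, Finset.mem_insert,
      Finset.mem_singleton, Fin.ext_iff]
    omega
  have hsum4 : ∑ i ∈ Finset.univ.filter (fun i : Fin n => (i : ℕ) < 4), r i
      = r ⟨0, by omega⟩ + r ⟨1, by omega⟩ + r ⟨2, by omega⟩ + r ⟨3, by omega⟩ := by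
    rw [h4]
    rw [Finset.sum_insert (by simp [Fin.ext_iff]), Finset.sum_insert (by simp [Fin.ext_iff]),
      Finset.sum_insert (by simp [Fin.ext_iff]), Finset.sum_singleton]
    ring
  have hcard : (Finset.univ.filter (fun i : Fin n => ¬ (i : ℕ) < 4)).card = n - 4 := by
    have h := Finset.card_filter_add_card_filter_not
      (s := (Finset.univ : Finset (Fin n))) (p := fun i : Fin n => (i : ℕ) < 4)
    have hc4 : (Finset.univ.filter (fun i : Fin n => (i : ℕ) < 4)).card = 4 := by
      rw [h4]
      rw [Finset.card_insert_of_notMem (by simp [Fin.ext_iff]),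
        Finset.card_insert_of_notMem (by simp [Fin.ext_iff]),
        Finset.card_insert_of_notMem (by simp [Fin.ext_iff]), Finset.card_singleton]
    simp only [Finset.card_univ, Fintype.card_fin] at h
    omega
  have hb : ∑ i ∈ Finset.univ.filter (fun i : Fin n => ¬ (i : ℕ) < 4), r i
      ≤ ((n : ℤ) - 4) * r ⟨n - 1, by omega⟩ := by
    calc ∑ i ∈ Finset.univ.filter (fun i : Fin n => ¬ (i : ℕ) < 4), r i
        ≤ (Finset.univ.filter (fun i : Fin n => ¬ (i : ℕ) < 4)).card • r ⟨n - 1, by omega⟩ :=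
          Finset.sum_le_card_nsmul _ _ _ (fun i _ => hR i)
      _ = ((n : ℤ) - 4) * r ⟨n - 1, by omega⟩ := by
          rw [hcard, nsmul_eq_mul]
          congr 1
          push_cast [Nat.cast_sub (by omega : 4 ≤ n)]
          ring
  rw [hsum4]
  linarith

/-- Lemma 3.9 (Lemma `lemma4` of the paper): bound on the tail of the local density sum
at p = 2 for the admissible quadruples (r₁,r₂,r₃,r₄). -/
theorem tail_sum_bound (n : ℕ) (hn : 6 ≤ n) (hne : Even n) (r : Fin n → ℤ)
    (h0 : 0 ≤ r ⟨0, by omega⟩) (hmono : Monotone r)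
    (hcases :
      (r ⟨0, by omega⟩ = 0 ∧ r ⟨1, by omega⟩ = 0 ∧ r ⟨2, by omega⟩ = 0 ∧
        0 ≤ r ⟨3, by omega⟩ ∧ r ⟨3, by omega⟩ ≤ 2) ∨
      (r ⟨0, by omega⟩ = 0 ∧ r ⟨1, by omega⟩ = 0 ∧ r ⟨2, by omega⟩ = 1 ∧
        1 ≤ r ⟨3, by omega⟩ ∧ r ⟨3, by omega⟩ ≤ 3) ∨
      (r ⟨0, by omega⟩ = 0 ∧ r ⟨1, by omega⟩ = 1 ∧ r ⟨2, by omega⟩ = 1 ∧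
        1 ≤ r ⟨3, by omega⟩ ∧ r ⟨3, by omega⟩ ≤ 2) ∨
      (r ⟨0, by omega⟩ = 0 ∧ r ⟨1, by omega⟩ = 1 ∧ r ⟨2, by omega⟩ = 2 ∧
        2 ≤ r ⟨3, by omega⟩ ∧ r ⟨3, by omega⟩ ≤ 3)) :
    tailSum n r (r ⟨n - 1, by omega⟩ + 2) ≤
      (2 : ℝ) ^ ((r ⟨3, by omega⟩ : ℝ) - (r ⟨n - 1, by omega⟩ : ℝ) - 1) ∧
    ((r ⟨0, by omega⟩ = 0 ∧ r ⟨1, by omega⟩ = 0 ∧ r ⟨2, by omega⟩ = 0 ∧ r ⟨3, by omega⟩ = 2) ∨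
     (r ⟨0, by omega⟩ = 0 ∧ r ⟨1, by omega⟩ = 0 ∧ r ⟨2, by omega⟩ = 1 ∧ r ⟨3, by omega⟩ = 3) →
      tailSum n r (r ⟨n - 1, by omega⟩ + 2) ≤
        (2 : ℝ) ^ ((r ⟨3, by omega⟩ : ℝ) - (r ⟨n - 1, by omega⟩ : ℝ) - 2)) := by
  have hNlt : n - 1 < n := by omega
  have hle : ∀ i, r i ≤ r ⟨n - 1, hNlt⟩ := by
    intro i
    apply hmono
    rw [Fin.le_def]
    show (i : ℕ) ≤ n - 1
    have := i.isLt
    omega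
  have hS4 := my_sum_bound n (by omega) r hle
  have hSr : (∑ i, (r i : ℝ)) ≤ (r ⟨0, by omega⟩ : ℝ) + (r ⟨1, by omega⟩ : ℝ)
      + (r ⟨2, by omega⟩ : ℝ) + (r ⟨3, by omega⟩ : ℝ)
      + ((n : ℝ) - 4) * (r ⟨n - 1, hNlt⟩ : ℝ) := by
    exact_mod_cast hS4
  constructor
  · have he1 : (r ⟨0, by omega⟩ : ℤ) + r ⟨1, by omega⟩ + r ⟨2, by omega⟩ - r ⟨3, by omega⟩
        ≤ 1 := by
      rcases hcases with ⟨h1, h2, h3, h4, h5⟩ | ⟨h1, h2, h3, h4, h5⟩ | ⟨h1, h2, h3, h4, h5⟩ |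
        ⟨h1, h2, h3, h4, h5⟩ <;> omega
    have he1' : (r ⟨0, by omega⟩ : ℝ) + (r ⟨1, by omega⟩ : ℝ) + (r ⟨2, by omega⟩ : ℝ)
        - (r ⟨3, by omega⟩ : ℝ) ≤ 1 := by exact_mod_cast he1
    apply my_core n hn hne r _ hle
    ring_nf
    ring_nf at hSr he1'
    linarith
  · intro hc2
    have he2 : (r ⟨0, by omega⟩ : ℤ) + r ⟨1, by omega⟩ + r ⟨2, by omega⟩ - r ⟨3, by omega⟩
        ≤ -2 := by
      rcases hc2 with ⟨h1, h2, h3, h4⟩ | ⟨h1, h2, h3, h4⟩ <;> omega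
    have he2' : (r ⟨0, by omega⟩ : ℝ) + (r ⟨1, by omega⟩ : ℝ) + (r ⟨2, by omega⟩ : ℝ)
        - (r ⟨3, by omega⟩ : ℝ) ≤ -2 := by exact_mod_cast he2
    apply my_core n hn hne r _ hle
    ring_nf
    ring_nf at hSr he2'
    linarith
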